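/- The graph G contains a multicolored k-clique, i.e., a clique with exactly one vertex from each class V_i, if and only if the constructed instance (H, T) is a yes-instance of Steiner Orientation. -/

import Mathlib

/-- A mixed graph `G = (V, E, A)`: a simple graph `E` of undirected edges together
with a set `A` of arcs (ordered pairs of distinct vertices). -/
structure MixedGraph (V : Type*) where
  E : SimpleGraph V
  A : V → V → Prop
  A_irrefl : ∀ v : V, ¬ A v v

namespace MixedGraph

variable {V : Type*}

/-- The underlying simple graph of a mixed graph. -/
def underlying (G : MixedGraph V) : SimpleGraph V where
  Adj u v := G.E.Adj u v ∨ G.A u v ∨ G.A v u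
  symm := by
    refine ⟨?_⟩
    intro u v h
    rcases h with h | h | h
    · exact Or.inl h.symm
    · exact Or.inr (Or.inr h)
    · exact Or.inr (Or.inl h)
  loopless := by
    refine ⟨?_⟩
    intro v h
    rcases h with h | h | h
    · exact G.E.loopless.irrefl v h
    · exact G.A_irrefl v h
    · exact G.A_irrefl v h

/-- `G` contains a mixed cycle: a cyclic sequence of `p ≥ 2` pairwise distinct
vertices in which each consecutive pair (cyclically) is an undirected edge of `E`
or an arc of `A`, and no edge of `E` is used by two different consecutive pairs.
(`useE i = true` means the `i`-th consecutive pair uses an edge of `E`.) -/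
def HasMixedCycle (G : MixedGraph V) : Prop :=
  ∃ (p : ℕ) (c : Fin (p + 2) → V) (useE : Fin (p + 2) → Bool),
    Function.Injective c ∧
    (∀ i : Fin (p + 2),
      (useE i = true → G.E.Adj (c i) (c (i + 1))) ∧
      (useE i = false → G.A (c i) (c (i + 1)))) ∧
    (∀ i j : Fin (p + 2), i ≠ j → useE i = true → useE j = true →
      s(c i, c (i + 1)) ≠ s(c j, c (j + 1)))

/-- A mixed graph is mixed acyclic if it has no mixed cycle. -/
def MixedAcyclic (G : MixedGraph V) : Prop := ¬ G.HasMixedCycle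

/-- An orientation of the undirected edges of a mixed graph: each edge
`{u,v} ∈ E` is assigned exactly one of the two directions `(u,v)`, `(v,u)`. -/
structure Orientation (G : MixedGraph V) where
  dir : V → V → Prop
  dir_adj : ∀ u v : V, dir u v → G.E.Adj u v
  total : ∀ u v : V, G.E.Adj u v → dir u v ∨ dir v u
  antisymm : ∀ u v : V, dir u v → ¬ dir v u

/-- The arc relation of the digraph `G_λ`: the original arcs together with the
chosen orientations of the undirected edges. -/
def Orientation.arc {G : MixedGraph V} (lam : Orientation G) (u v : V) : Prop :=
  G.A u v ∨ lam.dir u v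

/-- The orientation `lam` satisfies the set `T` of terminal pairs if `G_λ`
contains a directed path from `s` to `t` for every `(s, t) ∈ T`. -/
def Orientation.Satisfies {G : MixedGraph V} (lam : Orientation G)
    (T : Set (V × V)) : Prop :=
  ∀ p ∈ T, Relation.ReflTransGen lam.arc p.1 p.2

/-- `(G, T)` is a yes-instance of Steiner Orientation: some orientation of the
undirected edges satisfies all terminal pairs. -/
def YesInstance (G : MixedGraph V) (T : Set (V × V)) : Prop :=
  ∃ lam : Orientation G, lam.Satisfies T

/-- The number of arcs of `G` having `v` as head or as tail. -/
noncomputable def degA (G : MixedGraph V) (v : V) : ℕ :=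
  {p : V × V | G.A p.1 p.2 ∧ (p.1 = v ∨ p.2 = v)}.ncard

end MixedGraph

/-- Vertices of the mixed graph `H` in the W[1]-hardness construction:
`ℓ_α, ℓ'_α, r_α, r'_α` for `α ∈ [√k]` and `x^i_j, y^i_j` for `i ∈ [k]`,
`j ∈ [n]` (here `q` plays the role of `√k`). -/
inductive HVtx (q k n : ℕ) where
  | l (a : Fin q) : HVtx q k n
  | l' (a : Fin q) : HVtx q k n
  | r (a : Fin q) : HVtx q k n
  | r' (a : Fin q) : HVtx q k n
  | x (i : Fin k) (j : Fin n) : HVtx q k n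
  | y (i : Fin k) (j : Fin n) : HVtx q k n
  deriving DecidableEq, Fintype

/-- The undirected edges of `H`: for each `i` with `h i = (α, β)` and each `j`,
the edges `{ℓ_α, x^i_j}` and `{r'_β, y^i_j}`. -/
def wE (q k n : ℕ) (h : Fin k ≃ Fin q × Fin q) : SimpleGraph (HVtx q k n) :=
  SimpleGraph.fromRel (fun u v =>
    (∃ (i : Fin k) (j : Fin n), u = HVtx.l (h i).1 ∧ v = HVtx.x i j) ∨
    (∃ (i : Fin k) (j : Fin n), u = HVtx.r' (h i).2 ∧ v = HVtx.y i j))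

/-- The arcs of `H`: `(ℓ_α, ℓ'_β)` and `(r_α, r'_β)` for all `α, β`; and for
each `i` with `h i = (α, β)` and each `j`, the arcs `(x^i_j, r_β)` and
`(ℓ'_α, y^i_j)`. -/
def wA (q k n : ℕ) (h : Fin k ≃ Fin q × Fin q) :
    HVtx q k n → HVtx q k n → Prop := fun u v =>
  (∃ a b : Fin q, u = HVtx.l a ∧ v = HVtx.l' b) ∨
  (∃ a b : Fin q, u = HVtx.r a ∧ v = HVtx.r' b) ∨
  (∃ (i : Fin k) (j : Fin n), u = HVtx.x i j ∧ v = HVtx.r (h i).2) ∨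
  (∃ (i : Fin k) (j : Fin n), u = HVtx.l' (h i).1 ∧ v = HVtx.y i j)

/-- The mixed graph `H`. -/
def wH (q k n : ℕ) (h : Fin k ≃ Fin q × Fin q) : MixedGraph (HVtx q k n) where
  E := wE q k n h
  A := wA q k n h
  A_irrefl := by
    rintro u (⟨a, b, rfl, hh⟩ | ⟨a, b, rfl, hh⟩ | ⟨i, j, rfl, hh⟩ |
      ⟨i, j, rfl, hh⟩) <;> cases hh

/-- The terminal pairs `T`: `(ℓ_α, r_β)` and `(ℓ'_α, r'_β)` for all `α, β`;
the consistency pairs `(x^i_j, y^i_{j'})` for `j ≠ j'`; and, for every non-edge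
`{v^{i₁}_{j₁}, v^{i₂}_{j₂}}` of `G` with `i₁ ≠ i₂`, the edge-checking pairs
`(x^{i₁}_{j₁}, y^{i₂}_{j₂})` and `(x^{i₂}_{j₂}, y^{i₁}_{j₁})`. -/
def wT (q k n : ℕ) (G : SimpleGraph (Fin k × Fin n)) :
    Set (HVtx q k n × HVtx q k n) :=
  {p | (∃ a b : Fin q, p = (HVtx.l a, HVtx.r b)) ∨
       (∃ a b : Fin q, p = (HVtx.l' a, HVtx.r' b)) ∨
       (∃ (i : Fin k) (j j' : Fin n), j ≠ j' ∧ p = (HVtx.x i j, HVtx.y i j')) ∨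
       (∃ (i₁ i₂ : Fin k) (j₁ j₂ : Fin n), i₁ ≠ i₂ ∧
          ¬ G.Adj (i₁, j₁) (i₂, j₂) ∧ p = (HVtx.x i₁ j₁, HVtx.y i₂ j₂))}


section Aux

open HVtx MixedGraph Relation

variable {q k n : ℕ} {h : Fin k ≃ Fin q × Fin q}

private lemma reach_closed {α : Type*} {r : α → α → Prop} {S : α → Prop} {u v : α}
    (hr : Relation.ReflTransGen r u v) (hu : S u)
    (hstep : ∀ a b, S a → r a b → S b) : S v := by
  induction hr with
  | refl => exact hu
  | tail h1 h2 ih => exact hstep _ _ ih h2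

private lemma wE_adj_iff {u v : HVtx q k n} :
    (wH q k n h).E.Adj u v ↔ u ≠ v ∧
      (((∃ i j, u = HVtx.l (h i).1 ∧ v = HVtx.x i j) ∨
        (∃ i j, u = HVtx.r' (h i).2 ∧ v = HVtx.y i j)) ∨
       ((∃ i j, v = HVtx.l (h i).1 ∧ u = HVtx.x i j) ∨
        (∃ i j, v = HVtx.r' (h i).2 ∧ u = HVtx.y i j))) :=
  SimpleGraph.fromRel_adj _ _ _

private lemma dir_cases (lam : MixedGraph.Orientation (wH q k n h)) {u v : HVtx q k n}
    (hd : lam.dir u v) :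
    (∃ i j, u = HVtx.l (h i).1 ∧ v = HVtx.x i j) ∨
    (∃ i j, u = HVtx.x i j ∧ v = HVtx.l (h i).1) ∨
    (∃ i j, u = HVtx.r' (h i).2 ∧ v = HVtx.y i j) ∨
    (∃ i j, u = HVtx.y i j ∧ v = HVtx.r' (h i).2) := by
  have hadj := lam.dir_adj u v hd
  rw [wE_adj_iff] at hadj
  rcases hadj.2 with (⟨i,j,h1,h2⟩|⟨i,j,h1,h2⟩) | (⟨i,j,h1,h2⟩|⟨i,j,h1,h2⟩)
  · exact Or.inl ⟨i,j,h1,h2⟩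
  · exact Or.inr (Or.inr (Or.inl ⟨i,j,h1,h2⟩))
  · exact Or.inr (Or.inl ⟨i,j,h2,h1⟩)
  · exact Or.inr (Or.inr (Or.inr ⟨i,j,h2,h1⟩))

private lemma arc_from_l (lam : MixedGraph.Orientation (wH q k n h)) {a : Fin q}
    {v : HVtx q k n} (hv : lam.arc (HVtx.l a) v) :
    (∃ b, v = HVtx.l' b) ∨
    ∃ i j, (h i).1 = a ∧ v = HVtx.x i j ∧ lam.dir (HVtx.l a) (HVtx.x i j) := by
  rcases hv with (⟨a',b',h1,h2⟩|⟨a',b',h1,h2⟩|⟨i,j,h1,h2⟩|⟨i,j,h1,h2⟩) | hd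
  · exact Or.inl ⟨b', h2⟩
  · cases h1
  · cases h1
  · cases h1
  · rcases dir_cases lam hd with ⟨i,j,h1,h2⟩|⟨i,j,h1,h2⟩|⟨i,j,h1,h2⟩|⟨i,j,h1,h2⟩
    · injection h1 with h3
      subst h2
      exact Or.inr ⟨i, j, h3.symm, rfl, hd⟩
    · cases h1
    · cases h1
    · cases h1

private lemma arc_from_l' (lam : MixedGraph.Orientation (wH q k n h)) {a : Fin q}
    {v : HVtx q k n} (hv : lam.arc (HVtx.l' a) v) :
    ∃ i j, (h i).1 = a ∧ v = HVtx.y i j := by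
  rcases hv with (⟨a',b',h1,h2⟩|⟨a',b',h1,h2⟩|⟨i,j,h1,h2⟩|⟨i,j,h1,h2⟩) | hd
  · cases h1
  · cases h1
  · cases h1
  · injection h1 with h3
    exact ⟨i, j, h3.symm, h2⟩
  · rcases dir_cases lam hd with ⟨i,j,h1,h2⟩|⟨i,j,h1,h2⟩|⟨i,j,h1,h2⟩|⟨i,j,h1,h2⟩ <;>
      cases h1

private lemma arc_from_r (lam : MixedGraph.Orientation (wH q k n h)) {a : Fin q}
    {v : HVtx q k n} (hv : lam.arc (HVtx.r a) v) : ∃ b, v = HVtx.r' b := by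
  rcases hv with (⟨a',b',h1,h2⟩|⟨a',b',h1,h2⟩|⟨i,j,h1,h2⟩|⟨i,j,h1,h2⟩) | hd
  · cases h1
  · exact ⟨b', h2⟩
  · cases h1
  · cases h1
  · rcases dir_cases lam hd with ⟨i,j,h1,h2⟩|⟨i,j,h1,h2⟩|⟨i,j,h1,h2⟩|⟨i,j,h1,h2⟩ <;>
      cases h1

private lemma arc_from_r' (lam : MixedGraph.Orientation (wH q k n h)) {b : Fin q}
    {v : HVtx q k n} (hv : lam.arc (HVtx.r' b) v) :
    ∃ i j, (h i).2 = b ∧ v = HVtx.y i j ∧ lam.dir (HVtx.r' b) (HVtx.y i j) := by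
  rcases hv with (⟨a',b',h1,h2⟩|⟨a',b',h1,h2⟩|⟨i,j,h1,h2⟩|⟨i,j,h1,h2⟩) | hd
  · cases h1
  · cases h1
  · cases h1
  · cases h1
  · rcases dir_cases lam hd with ⟨i,j,h1,h2⟩|⟨i,j,h1,h2⟩|⟨i,j,h1,h2⟩|⟨i,j,h1,h2⟩
    · cases h1
    · cases h1
    · injection h1 with h3
      subst h2
      exact ⟨i, j, h3.symm, rfl, hd⟩
    · cases h1

private lemma arc_from_x (lam : MixedGraph.Orientation (wH q k n h)) {i : Fin k}
    {j : Fin n} {v : HVtx q k n} (hv : lam.arc (HVtx.x i j) v) :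
    v = HVtx.r (h i).2 ∨
      (v = HVtx.l (h i).1 ∧ lam.dir (HVtx.x i j) (HVtx.l (h i).1)) := by
  rcases hv with (⟨a',b',h1,h2⟩|⟨a',b',h1,h2⟩|⟨i',j',h1,h2⟩|⟨i',j',h1,h2⟩) | hd
  · cases h1
  · cases h1
  · injection h1 with h3 h4
    subst h3
    exact Or.inl h2
  · cases h1
  · rcases dir_cases lam hd with ⟨i',j',h1,h2⟩|⟨i',j',h1,h2⟩|⟨i',j',h1,h2⟩|⟨i',j',h1,h2⟩
    · cases h1
    · injection h1 with h3 h4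
      subst h3; subst h2
      exact Or.inr ⟨rfl, hd⟩
    · cases h1
    · cases h1

private lemma arc_from_y (lam : MixedGraph.Orientation (wH q k n h)) {i : Fin k}
    {j : Fin n} {v : HVtx q k n} (hv : lam.arc (HVtx.y i j) v) :
    v = HVtx.r' (h i).2 ∧ lam.dir (HVtx.y i j) (HVtx.r' (h i).2) := by
  rcases hv with (⟨a',b',h1,h2⟩|⟨a',b',h1,h2⟩|⟨i',j',h1,h2⟩|⟨i',j',h1,h2⟩) | hd
  · cases h1
  · cases h1
  · cases h1
  · cases h1
  · rcases dir_cases lam hd with ⟨i',j',h1,h2⟩|⟨i',j',h1,h2⟩|⟨i',j',h1,h2⟩|⟨i',j',h1,h2⟩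
    · cases h1
    · cases h1
    · cases h1
    · injection h1 with h3 h4
      subst h3; subst h2
      exact ⟨rfl, hd⟩

private lemma factA (lam : MixedGraph.Orientation (wH q k n h)) {a b : Fin q}
    (hp : Relation.ReflTransGen lam.arc (HVtx.l a : HVtx q k n) (HVtx.r b)) :
    ∃ i j, h i = (a, b) ∧ lam.dir (HVtx.l a) (HVtx.x i j) := by
  set S : HVtx q k n → Prop := fun v =>
    v = HVtx.l a ∨ (∃ c, v = HVtx.l' c) ∨ (∃ c, v = HVtx.r' c) ∨
    (∃ i j, v = HVtx.y i j) ∨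
    (∃ i j, (h i).1 = a ∧ v = HVtx.x i j ∧ lam.dir (HVtx.l a) (HVtx.x i j)) ∨
    (∃ i j, (h i).1 = a ∧ v = HVtx.r (h i).2 ∧ lam.dir (HVtx.l a) (HVtx.x i j))
    with hSdef
  have hstep : ∀ u v, S u → lam.arc u v → S v := by
    rintro u v (rfl | ⟨c, rfl⟩ | ⟨c, rfl⟩ | ⟨i, j, rfl⟩ |
        ⟨i, j, ha, rfl, hd⟩ | ⟨i, j, ha, rfl, hd⟩) huv
    · rcases arc_from_l lam huv with ⟨b', rfl⟩ | ⟨i, j, ha, rfl, hd⟩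
      · exact Or.inr (Or.inl ⟨b', rfl⟩)
      · exact Or.inr (Or.inr (Or.inr (Or.inr (Or.inl ⟨i, j, ha, rfl, hd⟩))))
    · obtain ⟨i, j, ha, rfl⟩ := arc_from_l' lam huv
      exact Or.inr (Or.inr (Or.inr (Or.inl ⟨i, j, rfl⟩)))
    · obtain ⟨i, j, ha, rfl, hd'⟩ := arc_from_r' lam huv
      exact Or.inr (Or.inr (Or.inr (Or.inl ⟨i, j, rfl⟩)))
    · obtain ⟨rfl, hd'⟩ := arc_from_y lam huv
      exact Or.inr (Or.inr (Or.inl ⟨_, rfl⟩))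
    · rcases arc_from_x lam huv with rfl | ⟨rfl, hd'⟩
      · exact Or.inr (Or.inr (Or.inr (Or.inr (Or.inr ⟨i, j, ha, rfl, hd⟩))))
      · rw [ha] at hd'
        exact absurd hd' (lam.antisymm _ _ hd)
    · obtain ⟨c, rfl⟩ := arc_from_r lam huv
      exact Or.inr (Or.inr (Or.inl ⟨c, rfl⟩))
  have hmem : S (HVtx.r b) := reach_closed hp (Or.inl rfl) hstep
  rcases hmem with he | ⟨c, he⟩ | ⟨c, he⟩ | ⟨i, j, he⟩ |
      ⟨i, j, ha, he, hd⟩ | ⟨i, j, ha, he, hd⟩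
  · cases he
  · cases he
  · cases he
  · cases he
  · cases he
  · injection he with h3
    exact ⟨i, j, by rw [Prod.ext_iff]; exact ⟨ha, h3.symm⟩, hd⟩

private lemma factB (lam : MixedGraph.Orientation (wH q k n h)) {a b : Fin q}
    (hp : Relation.ReflTransGen lam.arc (HVtx.l' a : HVtx q k n) (HVtx.r' b)) :
    ∃ i j, h i = (a, b) ∧ lam.dir (HVtx.y i j) (HVtx.r' b) := by
  set S : HVtx q k n → Prop := fun v =>
    v = HVtx.l' a ∨
    (∃ i j, v = HVtx.y i j ∧
      ((h i).1 = a ∨ lam.dir (HVtx.r' (h i).2) (HVtx.y i j))) ∨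
    (∃ i j, (h i).1 = a ∧ v = HVtx.r' (h i).2 ∧
      lam.dir (HVtx.y i j) (HVtx.r' (h i).2)) with hSdef
  have hstep : ∀ u v, S u → lam.arc u v → S v := by
    rintro u v (rfl | ⟨i, j, rfl, halt⟩ | ⟨i, j, ha, rfl, hd⟩) huv
    · obtain ⟨i, j, ha, rfl⟩ := arc_from_l' lam huv
      exact Or.inr (Or.inl ⟨i, j, rfl, Or.inl ha⟩)
    · obtain ⟨rfl, hd'⟩ := arc_from_y lam huv
      rcases halt with ha | hd''
      · exact Or.inr (Or.inr ⟨i, j, ha, rfl, hd'⟩)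
      · exact absurd hd' (lam.antisymm _ _ hd'')
    · obtain ⟨i', j', ha', rfl, hd'⟩ := arc_from_r' lam huv
      rw [← ha'] at hd'
      exact Or.inr (Or.inl ⟨i', j', rfl, Or.inr hd'⟩)
  have hmem : S (HVtx.r' b) := reach_closed hp (Or.inl rfl) hstep
  rcases hmem with he | ⟨i, j, he, halt⟩ | ⟨i, j, ha, he, hd⟩
  · cases he
  · cases he
  · injection he with h3
    refine ⟨i, j, by rw [Prod.ext_iff]; exact ⟨ha, h3.symm⟩, ?_⟩
    rw [h3]; exact hd

private lemma factC (lam : MixedGraph.Orientation (wH q k n h)) {i i' : Fin k}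
    {j j' : Fin n} (hd : lam.dir (HVtx.l (h i).1) (HVtx.x i j))
    (hp : Relation.ReflTransGen lam.arc (HVtx.x i j : HVtx q k n) (HVtx.y i' j')) :
    lam.dir (HVtx.r' (h i').2) (HVtx.y i' j') := by
  set S : HVtx q k n → Prop := fun v =>
    v = HVtx.x i j ∨ v = HVtx.r (h i).2 ∨ (∃ c, v = HVtx.r' c) ∨
    (∃ i'' j'', v = HVtx.y i'' j'' ∧
      lam.dir (HVtx.r' (h i'').2) (HVtx.y i'' j'')) with hSdef
  have hstep : ∀ u v, S u → lam.arc u v → S v := by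
    rintro u v (rfl | rfl | ⟨c, rfl⟩ | ⟨i'', j'', rfl, hdy⟩) huv
    · rcases arc_from_x lam huv with rfl | ⟨rfl, hd'⟩
      · exact Or.inr (Or.inl rfl)
      · exact absurd hd' (lam.antisymm _ _ hd)
    · obtain ⟨c, rfl⟩ := arc_from_r lam huv
      exact Or.inr (Or.inr (Or.inl ⟨c, rfl⟩))
    · obtain ⟨i'', j'', ha, rfl, hd'⟩ := arc_from_r' lam huv
      rw [← ha] at hd'
      exact Or.inr (Or.inr (Or.inr ⟨i'', j'', rfl, hd'⟩))
    · obtain ⟨rfl, hd'⟩ := arc_from_y lam huv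
      exact absurd hd' (lam.antisymm _ _ hdy)
  have hmem : S (HVtx.y i' j') := reach_closed hp (Or.inl rfl) hstep
  rcases hmem with he | he | ⟨c, he⟩ | ⟨i'', j'', he, hdy⟩
  · cases he
  · cases he
  · cases he
  · injection he with h3 h4
    subst h3; subst h4
    exact hdy

end Aux

/-- the graph `G` (with vertex classes `V_i = {i} × Fin n`, each an
independent set) contains a multicolored `k`-clique iff the constructed
instance `(H, T)` is a yes-instance of Steiner Orientation. -/
theorem steinerOrientation_stmt8 (q k n : ℕ) (h : Fin k ≃ Fin q × Fin q)
    (G : SimpleGraph (Fin k × Fin n))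
    (hind : ∀ (i : Fin k) (j j' : Fin n), ¬ G.Adj (i, j) (i, j')) :
    (∃ s : Fin k → Fin n,
        ∀ i₁ i₂ : Fin k, i₁ ≠ i₂ → G.Adj (i₁, s i₁) (i₂, s i₂)) ↔
      (wH q k n h).YesInstance (wT q k n G) := by
  constructor
  · rintro ⟨s, hs⟩
    refine ⟨{
      dir := fun u v =>
        (∃ i, u = HVtx.l (h i).1 ∧ v = HVtx.x i (s i)) ∨
        (∃ i j, j ≠ s i ∧ u = HVtx.x i j ∧ v = HVtx.l (h i).1) ∨
        (∃ i, u = HVtx.y i (s i) ∧ v = HVtx.r' (h i).2) ∨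
        (∃ i j, j ≠ s i ∧ u = HVtx.r' (h i).2 ∧ v = HVtx.y i j)
      dir_adj := by
        rintro u v (⟨i, rfl, rfl⟩ | ⟨i, j, hj, rfl, rfl⟩ | ⟨i, rfl, rfl⟩ |
          ⟨i, j, hj, rfl, rfl⟩) <;> rw [wE_adj_iff]
        · exact ⟨by simp, Or.inl (Or.inl ⟨i, s i, rfl, rfl⟩)⟩
        · exact ⟨by simp, Or.inr (Or.inl ⟨i, j, rfl, rfl⟩)⟩
        · exact ⟨by simp, Or.inr (Or.inr ⟨i, s i, rfl, rfl⟩)⟩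
        · exact ⟨by simp, Or.inl (Or.inr ⟨i, j, rfl, rfl⟩)⟩
      total := by
        intro u v hadj
        rw [wE_adj_iff] at hadj
        rcases hadj.2 with (⟨i,j,rfl,rfl⟩|⟨i,j,rfl,rfl⟩) | (⟨i,j,rfl,rfl⟩|⟨i,j,rfl,rfl⟩)
        · by_cases hj : j = s i
          · subst hj; exact Or.inl (Or.inl ⟨i, rfl, rfl⟩)
          · exact Or.inr (Or.inr (Or.inl ⟨i, j, hj, rfl, rfl⟩))
        · by_cases hj : j = s i
          · subst hj; exact Or.inr (Or.inr (Or.inr (Or.inl ⟨i, rfl, rfl⟩)))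
          · exact Or.inl (Or.inr (Or.inr (Or.inr ⟨i, j, hj, rfl, rfl⟩)))
        · by_cases hj : j = s i
          · subst hj; exact Or.inr (Or.inl ⟨i, rfl, rfl⟩)
          · exact Or.inl (Or.inr (Or.inl ⟨i, j, hj, rfl, rfl⟩))
        · by_cases hj : j = s i
          · subst hj; exact Or.inl (Or.inr (Or.inr (Or.inl ⟨i, rfl, rfl⟩)))
          · exact Or.inr (Or.inr (Or.inr (Or.inr ⟨i, j, hj, rfl, rfl⟩)))
      antisymm := by
        rintro u v (⟨i, rfl, rfl⟩ | ⟨i, j, hj, rfl, rfl⟩ | ⟨i, rfl, rfl⟩ |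
            ⟨i, j, hj, rfl, rfl⟩) <;>
          rintro (⟨i', e1, e2⟩ | ⟨i', j', hj', e1, e2⟩ | ⟨i', e1, e2⟩ |
            ⟨i', j', hj', e1, e2⟩) <;> simp_all
        all_goals first
          | (obtain ⟨rfl, rfl⟩ := e1; exact hj' rfl)
          | (obtain ⟨rfl, rfl⟩ := e2; exact hj' rfl) }, ?_⟩
    rintro p (⟨a, b, rfl⟩ | ⟨a, b, rfl⟩ | ⟨i, j, j', hne, rfl⟩ |
      ⟨i₁, i₂, j₁, j₂, hne, hnadj, rfl⟩)
    · have hi : h (h.symm (a, b)) = (a, b) := h.apply_symm_apply _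
      refine Relation.ReflTransGen.head (b := HVtx.x (h.symm (a,b)) (s (h.symm (a,b))))
        (Or.inr (Or.inl ⟨h.symm (a,b), by rw [hi], rfl⟩))
        (Relation.ReflTransGen.single ?_)
      exact Or.inl (Or.inr (Or.inr (Or.inl ⟨h.symm (a,b), s (h.symm (a,b)), rfl, by rw [hi]⟩)))
    · have hi : h (h.symm (a, b)) = (a, b) := h.apply_symm_apply _
      refine Relation.ReflTransGen.head (b := HVtx.y (h.symm (a,b)) (s (h.symm (a,b))))
        (Or.inl (Or.inr (Or.inr (Or.inr ⟨h.symm (a,b), s (h.symm (a,b)), by rw [hi], rfl⟩))))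
        (Relation.ReflTransGen.single ?_)
      exact Or.inr (Or.inr (Or.inr (Or.inl ⟨h.symm (a,b), rfl, by rw [hi]⟩)))
    · by_cases hj : j = s i
      · have hj' : j' ≠ s i := fun he => hne (hj.trans he.symm)
        refine Relation.ReflTransGen.head (b := HVtx.r (h i).2)
          (Or.inl (Or.inr (Or.inr (Or.inl ⟨i, j, rfl, rfl⟩))))
          (Relation.ReflTransGen.head (b := HVtx.r' (h i).2)
            (Or.inl (Or.inr (Or.inl ⟨(h i).2, (h i).2, rfl, rfl⟩)))
            (Relation.ReflTransGen.single
              (Or.inr (Or.inr (Or.inr (Or.inr ⟨i, j', hj', rfl, rfl⟩))))))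
      · refine Relation.ReflTransGen.head (b := HVtx.l (h i).1)
          (Or.inr (Or.inr (Or.inl ⟨i, j, hj, rfl, rfl⟩)))
          (Relation.ReflTransGen.head (b := HVtx.l' (h i).1)
            (Or.inl (Or.inl ⟨(h i).1, (h i).1, rfl, rfl⟩))
            (Relation.ReflTransGen.single
              (Or.inl (Or.inr (Or.inr (Or.inr ⟨i, j', rfl, rfl⟩))))))
    · have hkey : ¬ (j₁ = s i₁ ∧ j₂ = s i₂) := by
        rintro ⟨rfl, rfl⟩; exact hnadj (hs i₁ i₂ hne)
      by_cases hj1 : j₁ = s i₁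
      · have hj2 : j₂ ≠ s i₂ := fun he => hkey ⟨hj1, he⟩
        refine Relation.ReflTransGen.head (b := HVtx.r (h i₁).2)
          (Or.inl (Or.inr (Or.inr (Or.inl ⟨i₁, j₁, rfl, rfl⟩))))
          (Relation.ReflTransGen.head (b := HVtx.r' (h i₂).2)
            (Or.inl (Or.inr (Or.inl ⟨(h i₁).2, (h i₂).2, rfl, rfl⟩)))
            (Relation.ReflTransGen.single
              (Or.inr (Or.inr (Or.inr (Or.inr ⟨i₂, j₂, hj2, rfl, rfl⟩))))))
      · refine Relation.ReflTransGen.head (b := HVtx.l (h i₁).1)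
          (Or.inr (Or.inr (Or.inl ⟨i₁, j₁, hj1, rfl, rfl⟩)))
          (Relation.ReflTransGen.head (b := HVtx.l' (h i₂).1)
            (Or.inl (Or.inl ⟨(h i₁).1, (h i₂).1, rfl, rfl⟩))
            (Relation.ReflTransGen.single
              (Or.inl (Or.inr (Or.inr (Or.inr ⟨i₂, j₂, rfl, rfl⟩))))))
  · rintro ⟨lam, hsat⟩
    have hx : ∀ i : Fin k, ∃ j, lam.dir (HVtx.l (h i).1) (HVtx.x i j) := by
      intro i
      have hp := hsat (HVtx.l (h i).1, HVtx.r (h i).2) (Or.inl ⟨(h i).1, (h i).2, rfl⟩)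
      obtain ⟨i', j, he, hd⟩ := factA lam hp
      obtain rfl : i' = i := h.injective (he.trans (Prod.mk.eta))
      exact ⟨j, hd⟩
    have hy : ∀ i : Fin k, ∃ j, lam.dir (HVtx.y i j) (HVtx.r' (h i).2) := by
      intro i
      have hp := hsat (HVtx.l' (h i).1, HVtx.r' (h i).2)
        (Or.inr (Or.inl ⟨(h i).1, (h i).2, rfl⟩))
      obtain ⟨i', j, he, hd⟩ := factB lam hp
      obtain rfl : i' = i := h.injective (he.trans (Prod.mk.eta))
      exact ⟨j, hd⟩
    choose sx hsx using hx
    choose sy hsy using hy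
    have hxy : ∀ i, sx i = sy i := by
      intro i
      by_contra hne
      have hp := hsat (HVtx.x i (sx i), HVtx.y i (sy i))
        (Or.inr (Or.inr (Or.inl ⟨i, sx i, sy i, hne, rfl⟩)))
      exact lam.antisymm _ _ (hsy i) (factC lam (hsx i) hp)
    refine ⟨sx, fun i₁ i₂ hne => ?_⟩
    by_contra hadj
    have hp := hsat (HVtx.x i₁ (sx i₁), HVtx.y i₂ (sx i₂))
      (Or.inr (Or.inr (Or.inr ⟨i₁, i₂, sx i₁, sx i₂, hne, hadj, rfl⟩)))
    have hd2 := factC lam (hsx i₁) hp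
    rw [hxy i₂] at hd2
    exact lam.antisymm _ _ (hsy i₂) hd2
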